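/- One-step form of Theorem 1 (optimal conditional policy and opponent model): fix Q : A × B → ℝ, α > 0, and a prior P on B with P(b) > 0. Define the objective J(π,ρ) = ∑_b ρ(b)·( ∑_a π(b,a)·(Q(a,b) − α·log π(b,a)) − log(ρ(b)/P(b)) ) over conditional policies π and opponent models ρ. Then for all (π,ρ), J(π,ρ) ≤ V := log(∑_b P(b)·(∑_a exp(Q(a,b)/α))^α), and equality holds for the pair π*(b,a) = exp(Q(a,b)/α)/∑_{a'} exp(Q(a',b)/α) and ρ*(b) = P(b)·(∑_a exp(Q(a,b)/α))^α / exp(V). Hence (π*, ρ*) maximizes J with maximum value V. -/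

import Mathlib

lemma gibbs_aux {ι : Type*} [Fintype ι] [Nonempty ι] (w q : ι → ℝ)
    (hw : ∀ i, 0 ≤ w i) (hw1 : ∑ i, w i = 1) (hq : ∀ i, 0 < q i) :
    ∑ i, w i * (Real.log (q i) - Real.log (w i)) ≤ Real.log (∑ i, q i) := by
  set S := ∑ i, q i with hSdef
  have hS : 0 < S := Finset.sum_pos (fun i _ => hq i) Finset.univ_nonempty
  have key : ∀ i, w i * (Real.log (q i) - Real.log (w i))
      ≤ q i / S + w i * Real.log S - w i := by
    intro i
    rcases eq_or_lt_of_le (hw i) with h0 | hpos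
    · rw [← h0]
      simp
      exact div_nonneg (hq i).le hS.le
    · have h1 : Real.log (q i / (S * w i)) ≤ q i / (S * w i) - 1 :=
        Real.log_le_sub_one_of_pos (div_pos (hq i) (mul_pos hS hpos))
      rw [Real.log_div (hq i).ne' (mul_pos hS hpos).ne',
        Real.log_mul hS.ne' hpos.ne'] at h1
      have h2 := mul_le_mul_of_nonneg_left h1 (hw i)
      have h3 : w i * (q i / (S * w i) - 1) = q i / S - w i := by
        field_simp
      nlinarith [h2, h3]
  calc ∑ i, w i * (Real.log (q i) - Real.log (w i))
      ≤ ∑ i, (q i / S + w i * Real.log S - w i) :=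
        Finset.sum_le_sum fun i _ => key i
    _ = Real.log S := by
        rw [Finset.sum_sub_distrib, Finset.sum_add_distrib, ← Finset.sum_div,
          ← Finset.sum_mul, hw1, ← hSdef, div_self hS.ne']
        ring

/-- The one-step ROMMEO objective
J(π,ρ) = ∑_b ρ(b)·( ∑_a π(b,a)·(Q(a,b) − α·log π(b,a)) − log(ρ(b)/P(b)) ). -/
noncomputable def rommeoObjective {A B : Type*} [Fintype A] [Fintype B]
    (Q : A × B → ℝ) (α : ℝ) (P : B → ℝ) (π : B → A → ℝ) (ρ : B → ℝ) : ℝ :=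
  ∑ b, ρ b * ((∑ a, π b a * (Q (a, b) - α * Real.log (π b a)))
      - Real.log (ρ b / P b))

/-- The soft value V = log ∑_b P(b)·(∑_a exp(Q(a,b)/α))^α. -/
noncomputable def rommeoValue {A B : Type*} [Fintype A] [Fintype B]
    (Q : A × B → ℝ) (α : ℝ) (P : B → ℝ) : ℝ :=
  Real.log (∑ b, P b * (∑ a, Real.exp (Q (a, b) / α)) ^ α)

/-- One-step form of Theorem 1 (optimal conditional policy and opponent
model): J(π,ρ) ≤ V for all conditional policies π and opponent models ρ, and
equality holds at π*(b,a) = exp(Q(a,b)/α)/∑_{a'} exp(Q(a',b)/α) and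
ρ*(b) = P(b)·(∑_a exp(Q(a,b)/α))^α / exp(V).  Hence (π*,ρ*) maximizes J with
maximum value V. -/
theorem rommeo_one_step_optimal_policy_and_opponent_model
    {A B : Type*} [Fintype A] [Fintype B] [Nonempty A] [Nonempty B]
    (Q : A × B → ℝ) (α : ℝ) (hα : 0 < α)
    (P : B → ℝ) (hP_pos : ∀ b, 0 < P b) (hP_sum : ∑ b, P b = 1) :
    (∀ (π : B → A → ℝ) (ρ : B → ℝ),
        (∀ b a, 0 ≤ π b a) → (∀ b, ∑ a, π b a = 1) →
        (∀ b, 0 ≤ ρ b) → (∑ b, ρ b = 1) →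
        rommeoObjective Q α P π ρ ≤ rommeoValue Q α P)
    ∧ rommeoObjective Q α P
        (fun b a => Real.exp (Q (a, b) / α) / ∑ a', Real.exp (Q (a', b) / α))
        (fun b => P b * (∑ a, Real.exp (Q (a, b) / α)) ^ α
            / Real.exp (rommeoValue Q α P))
      = rommeoValue Q α P := by
  set Z : B → ℝ := fun b => ∑ a, Real.exp (Q (a, b) / α) with hZdef
  have hZ : ∀ b, 0 < Z b := fun b =>
    Finset.sum_pos (fun a _ => Real.exp_pos _) Finset.univ_nonempty
  -- q' b = P b * Z b ^ α, positive
  set q' : B → ℝ := fun b => P b * Z b ^ α with hq'def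
  have hq' : ∀ b, 0 < q' b := fun b =>
    mul_pos (hP_pos b) (Real.rpow_pos_of_pos (hZ b) α)
  have hV : rommeoValue Q α P = Real.log (∑ b, q' b) := rfl
  have hSum_pos : 0 < ∑ b, q' b :=
    Finset.sum_pos (fun b _ => hq' b) Finset.univ_nonempty
  have hexpV : Real.exp (rommeoValue Q α P) = ∑ b, q' b := by
    rw [hV, Real.exp_log hSum_pos]
  have hlogq' : ∀ b, Real.log (q' b) = Real.log (P b) + α * Real.log (Z b) := by
    intro b
    rw [hq'def, Real.log_mul (hP_pos b).ne' (Real.rpow_pos_of_pos (hZ b) α).ne',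
      Real.log_rpow (hZ b)]
  constructor
  · intro π ρ hπ0 hπ1 hρ0 hρ1
    -- inner bound
    have inner : ∀ b, ∑ a, π b a * (Q (a, b) - α * Real.log (π b a))
        ≤ α * Real.log (Z b) := by
      intro b
      have hg := gibbs_aux (π b) (fun a => Real.exp (Q (a, b) / α))
        (hπ0 b) (hπ1 b) (fun a => Real.exp_pos _)
      have hg' := mul_le_mul_of_nonneg_left hg hα.le
      calc ∑ a, π b a * (Q (a, b) - α * Real.log (π b a))
          = α * ∑ a, π b a * (Real.log (Real.exp (Q (a, b) / α))
              - Real.log (π b a)) := by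
            rw [Finset.mul_sum]
            refine Finset.sum_congr rfl fun a _ => ?_
            rw [Real.log_exp]
            field_simp
        _ ≤ α * Real.log (Z b) := hg'
    -- termwise outer bound
    have outer : ∀ b, ρ b * ((∑ a, π b a * (Q (a, b) - α * Real.log (π b a)))
        - Real.log (ρ b / P b))
        ≤ ρ b * (Real.log (q' b) - Real.log (ρ b)) := by
      intro b
      rcases eq_or_lt_of_le (hρ0 b) with h0 | hpos
      · rw [← h0]; simp
      · have hle : (∑ a, π b a * (Q (a, b) - α * Real.log (π b a)))
            - Real.log (ρ b / P b)
            ≤ Real.log (q' b) - Real.log (ρ b) := by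
          rw [Real.log_div hpos.ne' (hP_pos b).ne', hlogq' b]
          linarith [inner b]
        exact mul_le_mul_of_nonneg_left hle (hρ0 b)
    calc rommeoObjective Q α P π ρ
        ≤ ∑ b, ρ b * (Real.log (q' b) - Real.log (ρ b)) :=
          Finset.sum_le_sum fun b _ => outer b
      _ ≤ Real.log (∑ b, q' b) := gibbs_aux ρ q' hρ0 hρ1 hq'
      _ = rommeoValue Q α P := hV.symm
  · -- equality at the optimizers
    have hπstar : ∀ b, ∑ a, Real.exp (Q (a, b) / α) / Z b *
        (Q (a, b) - α * Real.log (Real.exp (Q (a, b) / α) / Z b))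
        = α * Real.log (Z b) := by
      intro b
      have hlog : ∀ a : A, Real.log (Real.exp (Q (a, b) / α) / Z b)
          = Q (a, b) / α - Real.log (Z b) := by
        intro a
        rw [Real.log_div (Real.exp_pos _).ne' (hZ b).ne', Real.log_exp]
      have : ∀ a : A, Real.exp (Q (a, b) / α) / Z b *
          (Q (a, b) - α * Real.log (Real.exp (Q (a, b) / α) / Z b))
          = Real.exp (Q (a, b) / α) / Z b * (α * Real.log (Z b)) := by
        intro a
        rw [hlog a]
        have : Q (a, b) - α * (Q (a, b) / α - Real.log (Z b))
            = α * Real.log (Z b) := by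
          field_simp
          ring
        rw [this]
      rw [Finset.sum_congr rfl fun a _ => this a, ← Finset.sum_mul,
        ← Finset.sum_div, div_self (hZ b).ne', one_mul]
    unfold rommeoObjective
    have hterm : ∀ b, (q' b / Real.exp (rommeoValue Q α P)) *
        ((∑ a, Real.exp (Q (a, b) / α) / Z b *
          (Q (a, b) - α * Real.log (Real.exp (Q (a, b) / α) / Z b)))
        - Real.log ((q' b / Real.exp (rommeoValue Q α P)) / P b))
        = (q' b / Real.exp (rommeoValue Q α P)) * rommeoValue Q α P := by
      intro b
      rw [hπstar b]
      have hdiv : (q' b / Real.exp (rommeoValue Q α P)) / P b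
          = Z b ^ α / Real.exp (rommeoValue Q α P) := by
        rw [hq'def, div_div, mul_comm (Real.exp (rommeoValue Q α P)) (P b),
          ← div_div, mul_div_cancel_left₀ _ (hP_pos b).ne']
      rw [hdiv, Real.log_div (Real.rpow_pos_of_pos (hZ b) α).ne'
        (Real.exp_pos _).ne', Real.log_rpow (hZ b), Real.log_exp]
      ring
    calc ∑ b, (q' b / Real.exp (rommeoValue Q α P)) *
          ((∑ a, Real.exp (Q (a, b) / α) / Z b *
            (Q (a, b) - α * Real.log (Real.exp (Q (a, b) / α) / Z b)))
          - Real.log ((q' b / Real.exp (rommeoValue Q α P)) / P b))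
        = ∑ b, (q' b / Real.exp (rommeoValue Q α P)) * rommeoValue Q α P :=
          Finset.sum_congr rfl fun b _ => hterm b
      _ = rommeoValue Q α P := by
          rw [← Finset.sum_mul, ← Finset.sum_div, hexpV, div_self hSum_pos.ne',
            one_mul]
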